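/- Let m ≥ 1 be an integer and q_m¹(μ) = (5+(m−1)μ)·(10 + 5(m−1)μ + ((m²−5m−4)/2)μ²), so that q_m¹(μ) = (1/((m+1)μ)) · (dP_μ^m/dη)(1/2). For m ≥ 6, q_m¹(μ) > 0 for all μ > 0. For 1 ≤ m ≤ 5, q_m¹ has exactly one positive root μ_m¹ and q_m¹ is positive on [0, μ_m¹); moreover μ₁¹ = √(5/2), μ₂¹ = 2, μ₃¹ = √3 + 1, μ₄¹ = (15+√385)/8, μ₅¹ = 5+√30, and 0 < μ_m < μ_m¹ for 1 ≤ m ≤ 5, where μ_m is the smallest positive root of q_m(μ) = P_μ^m(1/2). -/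

import Mathlib

/-- The representative polynomial `P_μ^m` of type `I_{1,4}` (real variable). -/
noncomputable def PI14 (m : ℕ) (μ η : ℝ) : ℝ :=
  (1 - μ) * (2 - μ) * (3 - μ) * (4 - μ) +
    5 * ((m : ℝ) + 1) * (1 - μ) * (5 - 3 * μ) * (2 - μ) * μ * η +
    5 * ((m : ℝ) + 1) * ((m : ℝ) + 2) * (1 - μ) * (7 - 5 * μ) * μ ^ 2 * η ^ 2 +
    10 * ((m : ℝ) + 1) * ((m : ℝ) + 2) * ((m : ℝ) + 3) * (1 - μ) * μ ^ 3 * η ^ 3 +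
    ((m : ℝ) + 1) * ((m : ℝ) + 2) * ((m : ℝ) + 3) * ((m : ℝ) + 4) * μ ^ 4 * η ^ 4

/-- `q_m(μ) = P_μ^m(1/2)` for type `I_{1,4}`. -/
noncomputable def qI14 (m : ℕ) (μ : ℝ) : ℝ := PI14 m μ (1 / 2)

/-- `q_m¹(μ) = (5+(m-1)μ)·(10 + 5(m-1)μ + ((m²-5m-4)/2)μ²)` for type `I_{1,4}`. -/
noncomputable def qI14' (m : ℕ) (μ : ℝ) : ℝ :=
  (5 + ((m : ℝ) - 1) * μ) *
    (10 + 5 * ((m : ℝ) - 1) * μ + (((m : ℝ) ^ 2 - 5 * (m : ℝ) - 4) / 2) * μ ^ 2)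

lemma poly4_hasDerivAt (a b c d e x : ℝ) :
    HasDerivAt (fun η : ℝ => a + b * η + c * η ^ 2 + d * η ^ 3 + e * η ^ 4)
      (b + 2 * c * x + 3 * d * x ^ 2 + 4 * e * x ^ 3) x := by
  have h1 : HasDerivAt (fun η : ℝ => η) 1 x := hasDerivAt_id x
  have h2 := hasDerivAt_pow 2 x
  have h3 := hasDerivAt_pow 3 x
  have h4 := hasDerivAt_pow 4 x
  have H := ((((hasDerivAt_const x a).add (h1.const_mul b)).add
      (h2.const_mul c)).add (h3.const_mul d)).add (h4.const_mul e)
  refine H.congr_deriv ?_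
  norm_num
  ring

lemma qI14_cont (m : ℕ) : Continuous (qI14 m) := by
  unfold qI14 PI14
  fun_prop

set_option maxHeartbeats 1600000 in
/-- Sign of `(dP_μ^m/dη)(1/2)` for type `I_{1,4}`:
`q_m¹(μ) = (1/((m+1)μ))·(dP_μ^m/dη)(1/2)`; positive for all `μ > 0` when
`m ≥ 6`; for `1 ≤ m ≤ 5` a unique positive root `μ_m¹`, positivity on
`[0, μ_m¹)`, explicit values `μ₁¹ = √(5/2)`, `μ₂¹ = 2`, `μ₃¹ = √3+1`,
`μ₄¹ = (15+√385)/8`, `μ₅¹ = 5+√30`, and `0 < μ_m < μ_m¹` where `μ_m` is the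
smallest positive root of `q_m`. -/
theorem qI14'_sign :
    (∀ m : ℕ, 1 ≤ m → ∀ μ : ℝ, 0 < μ →
      qI14' m μ = (1 / (((m : ℝ) + 1) * μ)) * deriv (fun η : ℝ => PI14 m μ η) (1 / 2)) ∧
    (∀ m : ℕ, 6 ≤ m → ∀ μ : ℝ, 0 < μ → 0 < qI14' m μ) ∧
    (∀ m : ℕ, 1 ≤ m → m ≤ 5 → ∃! r : ℝ, 0 < r ∧ qI14' m r = 0) ∧
    (∀ m : ℕ, 1 ≤ m → m ≤ 5 → ∀ r : ℝ, 0 < r → qI14' m r = 0 →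
      (∀ μ : ℝ, 0 ≤ μ → μ < r → 0 < qI14' m μ) ∧
      (∀ μm : ℝ, 0 < μm → qI14 m μm = 0 →
        (∀ x : ℝ, 0 < x → qI14 m x = 0 → μm ≤ x) → μm < r)) ∧
    qI14' 1 (Real.sqrt (5 / 2)) = 0 ∧
    qI14' 2 2 = 0 ∧
    qI14' 3 (Real.sqrt 3 + 1) = 0 ∧
    qI14' 4 ((15 + Real.sqrt 385) / 8) = 0 ∧
    qI14' 5 (5 + Real.sqrt 30) = 0 := by
  refine ⟨?_, ?_, ?_, ?_, ?_, ?_, ?_, ?_, ?_⟩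
  · -- derivative identity
    intro m hm μ hμ
    have H := poly4_hasDerivAt ((1 - μ) * (2 - μ) * (3 - μ) * (4 - μ))
      (5 * ((m : ℝ) + 1) * (1 - μ) * (5 - 3 * μ) * (2 - μ) * μ)
      (5 * ((m : ℝ) + 1) * ((m : ℝ) + 2) * (1 - μ) * (7 - 5 * μ) * μ ^ 2)
      (10 * ((m : ℝ) + 1) * ((m : ℝ) + 2) * ((m : ℝ) + 3) * (1 - μ) * μ ^ 3)
      (((m : ℝ) + 1) * ((m : ℝ) + 2) * ((m : ℝ) + 3) * ((m : ℝ) + 4) * μ ^ 4) (1 / 2)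
    have H' : HasDerivAt (fun η : ℝ => PI14 m μ η)
        (5 * ((m : ℝ) + 1) * (1 - μ) * (5 - 3 * μ) * (2 - μ) * μ +
          2 * (5 * ((m : ℝ) + 1) * ((m : ℝ) + 2) * (1 - μ) * (7 - 5 * μ) * μ ^ 2) * (1 / 2) +
          3 * (10 * ((m : ℝ) + 1) * ((m : ℝ) + 2) * ((m : ℝ) + 3) * (1 - μ) * μ ^ 3) * (1 / 2) ^ 2 +
          4 * (((m : ℝ) + 1) * ((m : ℝ) + 2) * ((m : ℝ) + 3) * ((m : ℝ) + 4) * μ ^ 4) * (1 / 2) ^ 3)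
        (1 / 2) := by
      unfold PI14
      exact H
    rw [H'.deriv]
    have hm1 : ((m : ℝ) + 1) ≠ 0 := by positivity
    unfold qI14'
    field_simp
    ring
  · -- m ≥ 6
    intro m hm μ hμ
    have hm' : (6 : ℝ) ≤ (m : ℝ) := by exact_mod_cast hm
    unfold qI14'
    have h1 : 0 < 5 + ((m : ℝ) - 1) * μ := by nlinarith
    have h2 : 0 < 10 + 5 * ((m : ℝ) - 1) * μ + (((m : ℝ) ^ 2 - 5 * (m : ℝ) - 4) / 2) * μ ^ 2 := by
      nlinarith [sq_nonneg μ, mul_pos hμ hμ, mul_nonneg (mul_nonneg (by linarith : (0:ℝ) ≤ (m:ℝ) - 6) (by linarith : (0:ℝ) ≤ (m:ℝ) + 1)) (sq_nonneg μ)]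
    exact mul_pos h1 h2
  · -- unique positive root for 1 ≤ m ≤ 5
    intro m h1 h5
    interval_cases m
    · have hs : Real.sqrt (5 / 2) ^ 2 = 5 / 2 := Real.sq_sqrt (by norm_num)
      have hs0 : 0 < Real.sqrt (5 / 2) := Real.sqrt_pos.2 (by norm_num)
      refine ⟨Real.sqrt (5 / 2), ⟨hs0, ?_⟩, ?_⟩
      · unfold qI14'; push_cast; linear_combination (-20 : ℝ) * hs
      · rintro y ⟨hy, hy0⟩
        unfold qI14' at hy0; push_cast at hy0
        have hgy : 10 - 4 * y ^ 2 = 0 := by nlinarith [hy0]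
        have key : (y - Real.sqrt (5 / 2)) * (-4 * (y + Real.sqrt (5 / 2))) = 0 := by
          linear_combination hgy + 4 * hs
        rcases mul_eq_zero.1 key with h | h
        · linarith
        · nlinarith
    · refine ⟨2, ⟨by norm_num, by norm_num [qI14']⟩, ?_⟩
      rintro y ⟨hy, hy0⟩
      unfold qI14' at hy0; push_cast at hy0
      have hgy : 10 + 5 * y - 5 * y ^ 2 = 0 := by nlinarith [hy0]
      nlinarith [hgy, sq_nonneg (y - 2), sq_nonneg (y + 1)]
    · have hs : Real.sqrt 3 ^ 2 = 3 := Real.sq_sqrt (by norm_num)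
      have hs0 : 0 < Real.sqrt 3 := Real.sqrt_pos.2 (by norm_num)
      refine ⟨Real.sqrt 3 + 1, ⟨by linarith, ?_⟩, ?_⟩
      · unfold qI14'; push_cast; linear_combination (-(35 + 10 * Real.sqrt 3) : ℝ) * hs
      · rintro y ⟨hy, hy0⟩
        unfold qI14' at hy0; push_cast at hy0
        have hgy : 10 + 10 * y - 5 * y ^ 2 = 0 := by nlinarith [hy0]
        have key : (y - (Real.sqrt 3 + 1)) * (-5 * (y + Real.sqrt 3 + 1) + 10) = 0 := by
          linear_combination hgy + 5 * hs
        rcases mul_eq_zero.1 key with h | h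
        · linarith
        · nlinarith
    · have hs : Real.sqrt 385 ^ 2 = 385 := Real.sq_sqrt (by norm_num)
      have hs0 : 0 < Real.sqrt 385 := Real.sqrt_pos.2 (by norm_num)
      refine ⟨(15 + Real.sqrt 385) / 8, ⟨by positivity, ?_⟩, ?_⟩
      · unfold qI14'; push_cast; linear_combination (-(85 + 3 * Real.sqrt 385) / 128 : ℝ) * hs
      · rintro y ⟨hy, hy0⟩
        unfold qI14' at hy0; push_cast at hy0
        have hgy : 10 + 15 * y - 4 * y ^ 2 = 0 := by nlinarith [hy0]
        have key : (y - (15 + Real.sqrt 385) / 8) * (-4 * (y + (15 + Real.sqrt 385) / 8) + 15) = 0 := by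
          linear_combination hgy + (1 / 16 : ℝ) * hs
        rcases mul_eq_zero.1 key with h | h
        · linarith
        · nlinarith
    · have hs : Real.sqrt 30 ^ 2 = 30 := Real.sq_sqrt (by norm_num)
      have hs0 : 0 < Real.sqrt 30 := Real.sqrt_pos.2 (by norm_num)
      refine ⟨5 + Real.sqrt 30, ⟨by linarith, ?_⟩, ?_⟩
      · unfold qI14'; push_cast; linear_combination (-2 * (25 + 4 * Real.sqrt 30) : ℝ) * hs
      · rintro y ⟨hy, hy0⟩
        unfold qI14' at hy0; push_cast at hy0
        have hgy : 10 + 20 * y - 2 * y ^ 2 = 0 := by nlinarith [hy0]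
        have key : (y - (5 + Real.sqrt 30)) * (-2 * (y + 5 + Real.sqrt 30) + 20) = 0 := by
          linear_combination hgy + 2 * hs
        rcases mul_eq_zero.1 key with h | h
        · linarith
        · nlinarith
  · -- positivity on [0,r) and μ_m < r
    intro m h1 h5 r hr hr0
    have hcont : ContinuousOn (qI14 m) (Set.Icc 0 r) := (qI14_cont m).continuousOn
    interval_cases m
    all_goals (
      unfold qI14' at hr0; push_cast at hr0)
    -- m = 1
    · have hg : 10 - 4 * r ^ 2 = 0 := by nlinarith [hr0]
      constructor
      · intro μ hμ0 hμr
        unfold qI14'; push_cast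
        have hA : 0 < 5 + (0 : ℝ) * μ := by norm_num
        nlinarith [mul_pos hr (sub_pos.2 hμr), mul_nonneg (mul_nonneg hμ0 hr.le) (sub_pos.2 hμr).le, hg]
      · intro μm hμm hq0 hmin
        have hr2 : r ^ 2 = 5 / 2 := by linarith
        have hqr : qI14 1 r = -27 / 2 := by
          simp only [qI14, PI14]; push_cast
          linear_combination (r ^ 2 - 15 : ℝ) * hr2
        have h24 : qI14 1 0 = 24 := by norm_num [qI14, PI14]
        have hmem : (0 : ℝ) ∈ Set.Ioo (qI14 1 r) (qI14 1 0) := by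
          rw [hqr, h24]; constructor <;> norm_num
        obtain ⟨x, hx, hfx⟩ := intermediate_value_Ioo' hr.le hcont hmem
        have := hmin x hx.1 hfx
        linarith [hx.2]
    -- m = 2
    · have hg : 10 + 5 * r - 5 * r ^ 2 = 0 := by nlinarith [hr0]
      constructor
      · intro μ hμ0 hμr
        unfold qI14'; push_cast
        have hA : 0 < 5 + (1 : ℝ) * μ := by linarith
        nlinarith [mul_pos hr (sub_pos.2 hμr), mul_nonneg (mul_nonneg hμ0 hr.le) (sub_pos.2 hμr).le, hg]
      · intro μm hμm hq0 hmin
        have hr2 : r ^ 2 = 2 + r := by linarith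
        have hqr : qI14 2 r = -25 + -35 / 2 * r := by
          simp only [qI14, PI14]; push_cast
          linear_combination (r ^ 2 - 9 * r - 49 / 2 : ℝ) * hr2
        have h24 : qI14 2 0 = 24 := by norm_num [qI14, PI14]
        have hmem : (0 : ℝ) ∈ Set.Ioo (qI14 2 r) (qI14 2 0) := by
          rw [hqr, h24]; constructor <;> [linarith; norm_num]
        obtain ⟨x, hx, hfx⟩ := intermediate_value_Ioo' hr.le hcont hmem
        have := hmin x hx.1 hfx
        linarith [hx.2]
    -- m = 3
    · have hg : 10 + 10 * r - 5 * r ^ 2 = 0 := by nlinarith [hr0]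
      constructor
      · intro μ hμ0 hμr
        unfold qI14'; push_cast
        have hA : 0 < 5 + (2 : ℝ) * μ := by linarith
        nlinarith [mul_pos hr (sub_pos.2 hμr), mul_nonneg (mul_nonneg hμ0 hr.le) (sub_pos.2 hμr).le, hg]
      · intro μm hμm hq0 hmin
        have hr2 : r ^ 2 = 2 + 2 * r := by linarith
        have hqr : qI14 3 r = -74 + -94 * r := by
          simp only [qI14, PI14]; push_cast
          linear_combination (-3 / 2 * r ^ 2 - 23 * r - 49 : ℝ) * hr2
        have h24 : qI14 3 0 = 24 := by norm_num [qI14, PI14]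
        have hmem : (0 : ℝ) ∈ Set.Ioo (qI14 3 r) (qI14 3 0) := by
          rw [hqr, h24]; constructor <;> [linarith; norm_num]
        obtain ⟨x, hx, hfx⟩ := intermediate_value_Ioo' hr.le hcont hmem
        have := hmin x hx.1 hfx
        linarith [hx.2]
    -- m = 4
    · have hg : 10 + 15 * r - 4 * r ^ 2 = 0 := by nlinarith [hr0]
      constructor
      · intro μ hμ0 hμr
        unfold qI14'; push_cast
        have hA : 0 < 5 + (3 : ℝ) * μ := by linarith
        nlinarith [mul_pos hr (sub_pos.2 hμr), mul_nonneg (mul_nonneg hμ0 hr.le) (sub_pos.2 hμr).le, hg]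
      · intro μm hμm hq0 hmin
        have hr2 : r ^ 2 = 5 / 2 + 15 / 4 * r := by linarith
        have hqr : qI14 4 r = -23589 / 64 + -80775 / 128 * r := by
          simp only [qI14, PI14]; push_cast
          linear_combination (-13 / 2 * r ^ 2 - 375 / 8 * r - 5025 / 32 : ℝ) * hr2
        have h24 : qI14 4 0 = 24 := by norm_num [qI14, PI14]
        have hmem : (0 : ℝ) ∈ Set.Ioo (qI14 4 r) (qI14 4 0) := by
          rw [hqr, h24]; constructor <;> [linarith; norm_num]
        obtain ⟨x, hx, hfx⟩ := intermediate_value_Ioo' hr.le hcont hmem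
        have := hmin x hx.1 hfx
        linarith [hx.2]
    -- m = 5
    · have hg : 10 + 20 * r - 2 * r ^ 2 = 0 := by nlinarith [hr0]
      constructor
      · intro μ hμ0 hμr
        unfold qI14'; push_cast
        have hA : 0 < 5 + (4 : ℝ) * μ := by linarith
        nlinarith [mul_pos hr (sub_pos.2 hμr), mul_nonneg (mul_nonneg hμ0 hr.le) (sub_pos.2 hμr).le, hg]
      · intro μm hμm hq0 hmin
        have hr2 : r ^ 2 = 5 + 10 * r := by linarith
        have hqr : qI14 5 r = -6601 + -13825 * r := by
          simp only [qI14, PI14]; push_cast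
          linear_combination (-25 / 2 * r ^ 2 - 135 * r - 1325 : ℝ) * hr2
        have h24 : qI14 5 0 = 24 := by norm_num [qI14, PI14]
        have hmem : (0 : ℝ) ∈ Set.Ioo (qI14 5 r) (qI14 5 0) := by
          rw [hqr, h24]; constructor <;> [linarith; norm_num]
        obtain ⟨x, hx, hfx⟩ := intermediate_value_Ioo' hr.le hcont hmem
        have := hmin x hx.1 hfx
        linarith [hx.2]
  · have hs : Real.sqrt (5 / 2) ^ 2 = 5 / 2 := Real.sq_sqrt (by norm_num)
    unfold qI14'; push_cast; linear_combination (-20 : ℝ) * hs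
  · norm_num [qI14']
  · have hs : Real.sqrt 3 ^ 2 = 3 := Real.sq_sqrt (by norm_num)
    unfold qI14'; push_cast; linear_combination (-(35 + 10 * Real.sqrt 3) : ℝ) * hs
  · have hs : Real.sqrt 385 ^ 2 = 385 := Real.sq_sqrt (by norm_num)
    unfold qI14'; push_cast; linear_combination (-(85 + 3 * Real.sqrt 385) / 128 : ℝ) * hs
  · have hs : Real.sqrt 30 ^ 2 = 30 := Real.sq_sqrt (by norm_num)
    unfold qI14'; push_cast; linear_combination (-2 * (25 + 4 * Real.sqrt 30) : ℝ) * hs
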